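/- Let η be a real random variable whose law is symmetric (η and −η have the same distribution) with finite variance σ². Then for any real c ≤ 1 and any event of the form {c·η ≤ 1} with c ≥ 0, E[(1 + c·η + c²·η²)·1{c·η ≤ 1}] ≤ 1 + c²·σ², and consequently E[e^{c·η}·1{c·η ≤ 1}] ≤ exp(c²·σ²). -/

import Mathlib

open MeasureTheory ProbabilityTheory

lemma exp_le_one_add_add_sq {t : ℝ} (ht : t ≤ 1) :
    Real.exp t ≤ 1 + t + t ^ 2 := by
  rcases le_or_gt (-1) t with h | h
  · have hb := Real.exp_bound (x := t) (by rw [abs_le]; exact ⟨h, ht⟩) (n := 2) (by norm_num)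
    simp [Finset.sum_range_succ] at hb
    rw [abs_le] at hb
    nlinarith [sq_abs t, hb.2, sq_nonneg t]
  · have h1 : Real.exp t ≤ 1 := Real.exp_le_one_iff.mpr (by linarith)
    nlinarith

theorem truncated_exp_moment_symmetric
    {Ω : Type*} [MeasurableSpace Ω] (μ : Measure Ω) [IsProbabilityMeasure μ]
    (η : Ω → ℝ) (hη : Measurable η)
    (hsymm : Measure.map η μ = Measure.map (fun ω => -η ω) μ)
    (hL2 : MemLp η 2 μ)
    (σ2 : ℝ) (hσ2 : variance η μ = σ2)
    (c : ℝ) (hc1 : c ≤ 1) (hc0 : 0 ≤ c) :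
    (∫ ω in {ω | c * η ω ≤ 1}, (1 + c * η ω + c ^ 2 * (η ω) ^ 2) ∂μ
        ≤ 1 + c ^ 2 * σ2) ∧
    (∫ ω in {ω | c * η ω ≤ 1}, Real.exp (c * η ω) ∂μ
        ≤ Real.exp (c ^ 2 * σ2)) := by
  set S : Set Ω := {ω | c * η ω ≤ 1} with hSdef
  have hS : MeasurableSet S := measurableSet_le (hη.const_mul c) measurable_const
  have hη1 : Integrable η μ := hL2.integrable one_le_two
  have hsq : Integrable (fun ω => η ω ^ 2) μ := by
    have := hL2.integrable_sq
    simpa [sq] using this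
  -- mean is zero by symmetry
  have hmean : ∫ ω, η ω ∂μ = 0 := by
    have h1 := integral_map (μ := μ) hη.aemeasurable
      (aestronglyMeasurable_id (μ := Measure.map η μ))
    have h2 := integral_map (μ := μ) (φ := fun ω => -η ω) (hη.neg.aemeasurable)
      (aestronglyMeasurable_id (μ := Measure.map (fun ω => -η ω) μ))
    simp only [id] at h1 h2
    rw [hsymm, h2, integral_neg] at h1
    linarith
  -- second moment equals σ2
  have hvar : ∫ ω, η ω ^ 2 ∂μ = σ2 := by
    have h := variance_eq_sub hL2
    rw [hσ2] at h
    have : σ2 = (∫ ω, η ω ^ 2 ∂μ) - (∫ ω, η ω ∂μ) ^ 2 := by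
      simpa [Pi.pow_apply] using h
    rw [hmean] at this
    linarith
  set f : Ω → ℝ := fun ω => 1 + c * η ω + c ^ 2 * (η ω) ^ 2 with hfdef
  have i0 : Integrable (fun _ : Ω => (1 : ℝ)) μ := integrable_const 1
  have i1 : Integrable (fun ω => c * η ω) μ := hη1.const_mul c
  have i2 : Integrable (fun ω => 1 + c * η ω) μ := i0.add i1
  have i3 : Integrable (fun ω => c ^ 2 * η ω ^ 2) μ := hsq.const_mul (c ^ 2)
  have hf_int : Integrable f μ := i2.add i3
  have hf_nonneg : ∀ ω, 0 ≤ f ω := by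
    intro ω
    have := sq_nonneg (1 + 2 * (c * η ω))
    have h2 := sq_nonneg (c * η ω)
    simp only [hfdef]
    nlinarith
  have hf_total : ∫ ω, f ω ∂μ = 1 + c ^ 2 * σ2 := by
    simp only [hfdef]
    rw [integral_add i2 i3, integral_add i0 i1,
      integral_const, integral_const_mul, integral_const_mul, hmean, hvar]
    simp
  have part1 : ∫ ω in S, f ω ∂μ ≤ 1 + c ^ 2 * σ2 := by
    calc ∫ ω in S, f ω ∂μ ≤ ∫ ω, f ω ∂μ :=
          setIntegral_le_integral hf_int (ae_of_all _ hf_nonneg)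
      _ = 1 + c ^ 2 * σ2 := hf_total
  refine ⟨part1, ?_⟩
  have hexp_le : ∀ ω ∈ S, Real.exp (c * η ω) ≤ f ω := by
    intro ω hω
    have := exp_le_one_add_add_sq (t := c * η ω) hω
    simp only [hfdef]
    nlinarith [this]
  have hexp_int : IntegrableOn (fun ω => Real.exp (c * η ω)) S μ := by
    refine Integrable.mono (hf_int.restrict) ?_ ?_
    · exact (Real.measurable_exp.comp (hη.const_mul c)).aestronglyMeasurable
    · rw [ae_restrict_iff' hS]
      refine ae_of_all _ fun ω hω => ?_
      rw [Real.norm_eq_abs, Real.norm_eq_abs, abs_of_pos (Real.exp_pos _),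
        abs_of_nonneg (hf_nonneg ω)]
      exact hexp_le ω hω
  calc ∫ ω in S, Real.exp (c * η ω) ∂μ ≤ ∫ ω in S, f ω ∂μ :=
        setIntegral_mono_on hexp_int (hf_int.restrict) hS hexp_le
    _ ≤ 1 + c ^ 2 * σ2 := part1
    _ ≤ Real.exp (c ^ 2 * σ2) := by
        have := Real.add_one_le_exp (c ^ 2 * σ2); linarith
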